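/- arXiv:1706.03126 — 2 statements merged into one kernel-verified Lean document; each statement's English description precedes it below -/
import Mathlib

section
/- Let H be a proper subgroup of a finite group G and V an F H-module, char F ∤ |G|. Then b(G, Ind_H^G V) ≥ β(H, V), where b(G,W) is the top degree of the coinvariant algebra S(W)/S(W)_+^G S(W). -/
noncomputable section
open MvPolynomial

variable {F : Type} [Field F]

/-- The algebra homomorphism between polynomial algebras (viewed as symmetric algebras)
induced by a linear map between the spaces of variables (the degree one components). -/
noncomputable def algOf {α β : Type} [Fintype α] [Fintype β] [DecidableEq α]
    (f : (α → F) →ₗ[F] (β → F)) :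
    MvPolynomial α F →ₐ[F] MvPolynomial β F :=
  aeval fun j => ∑ i, f (Pi.single j 1) i • X i

/-- The embedding of the space of linear forms into the polynomial algebra. -/
noncomputable def lin {β : Type} [Fintype β] (w : β → F) : MvPolynomial β F :=
  ∑ i, w i • X i

/-- The subalgebra of `G`-invariants of the symmetric algebra of a representation. -/
def invariants {G : Type} [Group G] {α : Type} [Fintype α] [DecidableEq α]
    (ρ : Representation F G (α → F)) : Subalgebra F (MvPolynomial α F) where
  carrier := {p | ∀ g : G, algOf (ρ g) p = p}
  mul_mem' := fun ha hb g => by rw [map_mul, ha g, hb g]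
  add_mem' := fun ha hb g => by rw [map_add, ha g, hb g]
  algebraMap_mem' := fun r g => (algOf (ρ g)).commutes r

variable {G : Type} [Group G] {α : Type} [Fintype α] [DecidableEq α]

/-- The invariant ring is generated as an `F`-algebra in degrees at most `d`. -/
def genLE (ρ : Representation F G (α → F)) (d : ℕ) : Prop :=
  Algebra.adjoin F {p : MvPolynomial α F | p ∈ invariants ρ ∧ p.totalDegree ≤ d}
    = invariants ρ

/-- The Noether number `β(G,W)` of a representation. -/
def noether (ρ : Representation F G (α → F)) : ℕ := sInf {d | genLE ρ d}

/-- The Hilbert ideal: the ideal of `S(W)` generated by the invariants of positive degree. -/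
def hilbertIdeal (ρ : Representation F G (α → F)) : Ideal (MvPolynomial α F) :=
  Ideal.span {p | p ∈ invariants ρ ∧ constantCoeff p = 0}

/-- `b(G,W)`: the top degree of the algebra of coinvariants `S(W)/S(W)₊^G S(W)`. -/
def coinvTop (ρ : Representation F G (α → F)) : ℕ :=
  sSup {d | ∃ p : MvPolynomial α F, p.IsHomogeneous d ∧ p ∉ hilbertIdeal ρ}

/-- `b_k(G,W)`: the top degree of `S(W)/((S(W)₊^G)^k S(W))`. -/
def coinvTopK (ρ : Representation F G (α → F)) (k : ℕ) : ℕ :=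
  sSup {d | ∃ p : MvPolynomial α F, p.IsHomogeneous d ∧ p ∉ (hilbertIdeal ρ) ^ k}

/-- The span of all products of `k` positive-degree invariants,
i.e. `(S(W)₊^G)^k` computed inside the invariant ring. -/
def prodPow (ρ : Representation F G (α → F)) (k : ℕ) : Submodule F (MvPolynomial α F) :=
  Submodule.span F {x | ∃ f : Fin k → MvPolynomial α F,
    (∀ i, f i ∈ invariants ρ ∧ constantCoeff (f i) = 0) ∧ x = ∏ i, f i}

/-- The `k`-th Noether number `β_k(G,W)`, the top degree of `S(W)^G/(S(W)₊^G)^{k+1}`. -/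
def noetherK (ρ : Representation F G (α → F)) (k : ℕ) : ℕ :=
  sSup {d | ∃ p, p ∈ invariants ρ ∧ p.IsHomogeneous d ∧ p ∉ prodPow ρ (k+1)}

/-- `β(G)`: the supremum of the Noether numbers over all finite dimensional modules. -/
def noetherSup (F G : Type) [Field F] [Group G] : ℕ∞ :=
  ⨆ (n : ℕ) (ρ : Representation F G (Fin n → F)), (noether ρ : ℕ∞)

/-- `b(G)`: the supremum of `b(G,W)` over all finite dimensional modules. -/
def coinvSup (F G : Type) [Field F] [Group G] : ℕ∞ :=
  ⨆ (n : ℕ) (ρ : Representation F G (Fin n → F)), (coinvTop ρ : ℕ∞)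

/-- `β_k(G)`: the supremum of the `k`-th Noether numbers over all modules. -/
def noetherKSup (F G : Type) [Field F] [Group G] (k : ℕ) : ℕ∞ :=
  ⨆ (n : ℕ) (ρ : Representation F G (Fin n → F)), (noetherK ρ k : ℕ∞)

namespace Stmt10Aux
set_option linter.unusedSectionVars false

lemma mem_invariants {Γ : Type} [Group Γ] {κ₁ : Type} [Fintype κ₁] [DecidableEq κ₁]
    (τ : Representation F Γ (κ₁ → F)) {p : MvPolynomial κ₁ F} :
    p ∈ invariants τ ↔ ∀ g : Γ, algOf (τ g) p = p := Iff.rfl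

section basic
variable {κ₁ κ₂ κ₃ : Type} [Fintype κ₁] [Fintype κ₂] [Fintype κ₃]
  [DecidableEq κ₁] [DecidableEq κ₂] [DecidableEq κ₃]

lemma lin_single (j : κ₂) : lin (Pi.single j (1:F)) = X j := by
  rw [lin, Finset.sum_eq_single j]
  · simp
  · intro i _ hij
    simp [Pi.single_apply, Ne.symm hij]
  · simp

lemma algOf_X (f : (κ₁ → F) →ₗ[F] (κ₂ → F)) (j : κ₁) :
    algOf f (X j) = lin (f (Pi.single j 1)) := by
  simp [algOf, lin]

/-- `lin` as a linear map. -/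
def linMap : (κ₂ → F) →ₗ[F] MvPolynomial κ₂ F where
  toFun := lin
  map_add' x y := by simp [lin, add_smul, Finset.sum_add_distrib]
  map_smul' c x := by simp [lin, Finset.smul_sum, smul_smul]

lemma algOf_lin (f : (κ₁ → F) →ₗ[F] (κ₂ → F)) (w : κ₁ → F) :
    algOf f (lin w) = lin (f w) := by
  have h : ((algOf f).toLinearMap ∘ₗ linMap) = (linMap ∘ₗ f) := by
    apply Module.Basis.ext (Pi.basisFun F κ₁)
    intro j
    simp only [Pi.basisFun_apply, LinearMap.comp_apply]
    show algOf f (linMap (Pi.single j 1)) = lin (f (Pi.single j 1))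
    show algOf f (lin (Pi.single j 1)) = lin (f (Pi.single j 1))
    rw [lin_single, algOf_X]
  exact LinearMap.congr_fun h w

lemma algOf_comp' (g : (κ₂ → F) →ₗ[F] (κ₃ → F)) (f : (κ₁ → F) →ₗ[F] (κ₂ → F))
    (p : MvPolynomial κ₁ F) :
    algOf (g ∘ₗ f) p = algOf g (algOf f p) := by
  have h : (algOf (F := F) (g ∘ₗ f)) = (algOf g).comp (algOf f) := by
    apply algHom_ext
    intro j
    simp [algOf_X, AlgHom.comp_apply, algOf_lin]
  rw [h]; rfl

lemma algOf_id' (p : MvPolynomial κ₁ F) :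
    algOf (LinearMap.id : (κ₁ → F) →ₗ[F] (κ₁ → F)) p = p := by
  have h : (algOf (F := F) (LinearMap.id : (κ₁ → F) →ₗ[F] (κ₁ → F)))
      = AlgHom.id F (MvPolynomial κ₁ F) := by
    apply algHom_ext
    intro j
    simp [algOf_X, lin_single]
  rw [h]; rfl

lemma algOf_zero' (p : MvPolynomial κ₁ F) :
    algOf (0 : (κ₁ → F) →ₗ[F] (κ₂ → F)) p = C (constantCoeff p) := by
  rw [algOf]
  simp only [LinearMap.zero_apply, Pi.zero_apply, zero_smul, Finset.sum_const_zero]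
  rw [aeval_zero']
  rfl

lemma constantCoeff_lin (w : κ₂ → F) : constantCoeff (lin w) = 0 := by
  rw [lin, map_sum]
  simp [smul_eq_C_mul]

lemma constantCoeff_algOf' (f : (κ₁ → F) →ₗ[F] (κ₂ → F)) (p : MvPolynomial κ₁ F) :
    constantCoeff (algOf f p) = constantCoeff p := by
  have h : (constantCoeff.comp (algOf f).toRingHom : MvPolynomial κ₁ F →+* F)
      = constantCoeff := by
    apply ringHom_ext
    · intro a
      simp
    · intro j
      simp [algOf_X, constantCoeff_lin]
  exact RingHom.congr_fun h p

lemma isHomogeneous_lin (w : κ₂ → F) : (lin w).IsHomogeneous 1 := by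
  rw [lin]
  apply IsHomogeneous.sum
  intro i _
  rw [smul_eq_C_mul]
  simpa using (isHomogeneous_C κ₂ (w i)).mul (isHomogeneous_X F i)

lemma isHomogeneous_aeval {p : MvPolynomial κ₁ F} {n : ℕ} (g : κ₁ → MvPolynomial κ₂ F)
    (hg : ∀ j, (g j).IsHomogeneous 1) (hp : p.IsHomogeneous n) :
    (aeval g p).IsHomogeneous n := by
  rw [aeval_def, eval₂_eq]
  apply IsHomogeneous.sum
  intro d hd
  have hdeg : d.degree = n := by
    by_contra hne
    exact (mem_support_iff.mp hd) (hp.coeff_eq_zero hne)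
  have h1 : ((algebraMap F (MvPolynomial κ₂ F)) (coeff d p)).IsHomogeneous 0 := by
    rw [algebraMap_eq]; exact isHomogeneous_C _ _
  have h2 : (∏ i ∈ d.support, (g i) ^ d i).IsHomogeneous (∑ i ∈ d.support, 1 * d i) :=
    IsHomogeneous.prod d.support _ _ (fun i _ => (hg i).pow (d i))
  have h3 := h1.mul h2
  have hsum : (0 + ∑ i ∈ d.support, 1 * d i) = n := by
    simpa [Finsupp.degree_apply] using hdeg
  rw [hsum] at h3
  exact h3

lemma isHomogeneous_algOf (f : (κ₁ → F) →ₗ[F] (κ₂ → F)) {p : MvPolynomial κ₁ F} {n : ℕ}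
    (hp : p.IsHomogeneous n) : (algOf f p).IsHomogeneous n := by
  rw [algOf]
  exact isHomogeneous_aeval _ (fun j => isHomogeneous_lin (f (Pi.single j 1))) hp

lemma constantCoeff_of_isHomogeneous {p : MvPolynomial κ₂ F} {n : ℕ}
    (hp : p.IsHomogeneous n) (hn : n ≠ 0) : constantCoeff p = 0 := by
  rw [constantCoeff_eq]
  exact hp.coeff_eq_zero (by simpa using Ne.symm hn)

lemma homogComp_algOf (f : (κ₁ → F) →ₗ[F] (κ₁ → F)) (p : MvPolynomial κ₁ F) (e : ℕ) :
    homogeneousComponent e (algOf f p) = algOf f (homogeneousComponent e p) := by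
  conv_lhs => rw [← sum_homogeneousComponent p]
  rw [map_sum, map_sum]
  have : ∀ i ∈ Finset.range (p.totalDegree + 1),
      homogeneousComponent e (algOf f (homogeneousComponent i p))
        = if e = i then algOf f (homogeneousComponent i p) else 0 := by
    intro i _
    exact homogeneousComponent_of_mem
      ((mem_homogeneousSubmodule _ _).mpr
        (isHomogeneous_algOf f (homogeneousComponent_isHomogeneous i p)))
  rw [Finset.sum_congr rfl this, Finset.sum_ite_eq]
  by_cases he : e ∈ Finset.range (p.totalDegree + 1)
  · rw [if_pos he]
  · rw [if_neg he]
    have : homogeneousComponent e p = 0 := by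
      apply homogeneousComponent_eq_zero
      simpa [Nat.lt_succ_iff] using he
    rw [this, map_zero]

end basic

section reynolds
variable {K : Type} [Group K] [Fintype K] {κ₁ : Type} [Fintype κ₁] [DecidableEq κ₁]
variable (τ : Representation F K (κ₁ → F))

lemma algOf_rep_comp' (a b : K) (x : MvPolynomial κ₁ F) :
    algOf (τ a) (algOf (τ b) x) = algOf (τ (a * b)) x := by
  rw [map_mul, Module.End.mul_eq_comp, algOf_comp']

/-- The Reynolds operator. -/
def reyn (x : MvPolynomial κ₁ F) : MvPolynomial κ₁ F :=
  (Fintype.card K : F)⁻¹ • ∑ k : K, algOf (τ k) x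

lemma reyn_add (x y : MvPolynomial κ₁ F) : reyn τ (x + y) = reyn τ x + reyn τ y := by
  simp [reyn, Finset.sum_add_distrib, smul_add]

lemma reyn_sub (x y : MvPolynomial κ₁ F) : reyn τ (x - y) = reyn τ x - reyn τ y := by
  simp [reyn, Finset.sum_sub_distrib, smul_sub]

lemma reyn_zero : reyn τ (0 : MvPolynomial κ₁ F) = 0 := by simp [reyn]

lemma reyn_mem (x : MvPolynomial κ₁ F) : reyn τ x ∈ invariants τ := by
  rw [mem_invariants]
  intro g
  rw [reyn, map_smul, map_sum]
  congr 1
  calc ∑ k : K, algOf (τ g) (algOf (τ k) x)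
      = ∑ k : K, algOf (τ (g * k)) x := by
        exact Finset.sum_congr rfl fun k _ => algOf_rep_comp' τ g k x
    _ = ∑ k : K, algOf (τ k) x := Equiv.sum_comp (Equiv.mulLeft g) (fun k => algOf (τ k) x)

lemma reyn_of_mem (hK : (Fintype.card K : F) ≠ 0) {x : MvPolynomial κ₁ F} (hx : x ∈ invariants τ) : reyn τ x = x := by
  rw [mem_invariants] at hx
  rw [reyn]
  rw [Finset.sum_congr rfl fun k _ => hx k, Finset.sum_const, Finset.card_univ,
    ← Nat.cast_smul_eq_nsmul F, smul_smul, inv_mul_cancel₀ hK, one_smul]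

lemma reyn_mul_invariant {a : MvPolynomial κ₁ F} (ha : a ∈ invariants τ)
    (x : MvPolynomial κ₁ F) : reyn τ (a * x) = a * reyn τ x := by
  rw [mem_invariants] at ha
  calc reyn τ (a * x) = (Fintype.card K : F)⁻¹ • ∑ k : K, a * algOf (τ k) x := by
        rw [reyn]
        congr 1
        exact Finset.sum_congr rfl fun k _ => by rw [map_mul, ha k]
    _ = a * reyn τ x := by rw [← Finset.mul_sum, ← mul_smul_comm, reyn]

lemma constantCoeff_reyn (hK : (Fintype.card K : F) ≠ 0) (x : MvPolynomial κ₁ F) :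
    constantCoeff (reyn τ x) = constantCoeff x := by
  rw [reyn, smul_eq_C_mul, map_mul, constantCoeff_C, map_sum]
  rw [Finset.sum_congr rfl fun k _ => constantCoeff_algOf' (τ k) x]
  rw [Finset.sum_const, Finset.card_univ, nsmul_eq_mul, ← mul_assoc,
    inv_mul_cancel₀ hK, one_mul]

end reynolds

section vieta
variable {Γ : Type} [Group Γ] [Fintype Γ] {mm : ℕ} (σ : Representation F Γ (Fin mm → F))

/-- AlgHoms commute with `Multiset.esymm`. -/
lemma esymm_algHom (φ : MvPolynomial (Fin mm) F →ₐ[F] MvPolynomial (Fin mm) F)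
    (t : Multiset (MvPolynomial (Fin mm) F)) (k : ℕ) :
    φ (t.esymm k) = (t.map φ).esymm k := by
  rw [Multiset.esymm, map_multiset_sum, Multiset.map_map, Multiset.esymm,
    Multiset.powersetCard_map, Multiset.map_map]
  congr 1
  apply Multiset.map_congr rfl
  intro u _
  exact map_multiset_prod φ u

lemma X_pow_card_mem_hilbert (i : Fin mm) :
    (X i : MvPolynomial (Fin mm) F) ^ (Fintype.card Γ) ∈ hilbertIdeal σ := by
  classical
  set ℓ : Γ → MvPolynomial (Fin mm) F := fun g => algOf (σ g) (X i) with hℓ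
  set s : Multiset (MvPolynomial (Fin mm) F) :=
    Finset.univ.val.map (fun g => -ℓ g) with hs
  have hcard : Multiset.card s = Fintype.card Γ := by
    rw [hs, Multiset.card_map]; rfl
  -- invariance of the esymm's
  have hinv : ∀ k (g' : Γ), algOf (σ g') (s.esymm k) = s.esymm k := by
    intro k g'
    rw [esymm_algHom]
    congr 1
    rw [hs, Multiset.map_map]
    have h1 : ∀ g : Γ, (algOf (σ g')) (-ℓ g) = -ℓ (g' * g) := by
      intro g
      rw [map_neg]
      rw [hℓ]
      simp only
      rw [algOf_rep_comp']
    calc Multiset.map ((fun p => algOf (σ g') p) ∘ fun g => -ℓ g) Finset.univ.val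
        = Multiset.map ((fun g => -ℓ g) ∘ (fun g => g' * g)) Finset.univ.val := by
          apply Multiset.map_congr rfl
          intro g _
          exact h1 g
      _ = Multiset.map (fun g => -ℓ g) (Multiset.map (fun g => g' * g) Finset.univ.val) := by
          rw [Multiset.map_map]
      _ = Multiset.map (fun g => -ℓ g) Finset.univ.val := by
          congr 1
          have := Finset.map_univ_equiv (Equiv.mulLeft g')
          calc Multiset.map (fun g => g' * g) Finset.univ.val
              = (Finset.map (Equiv.mulLeft g').toEmbedding Finset.univ).val := by
                rw [Finset.map_val]; rfl
            _ = Finset.univ.val := by rw [this]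
  -- constant coefficients vanish
  have hcc : ∀ k, 1 ≤ k → constantCoeff (s.esymm k) = 0 := by
    intro k hk
    rw [Multiset.esymm, map_multiset_sum, Multiset.map_map]
    apply Multiset.sum_eq_zero
    intro x hx
    rw [Multiset.mem_map] at hx
    obtain ⟨t, ht, rfl⟩ := hx
    rw [Multiset.mem_powersetCard] at ht
    obtain ⟨a, ha⟩ : ∃ a, a ∈ t := by
      apply Multiset.exists_mem_of_ne_zero
      intro h0
      rw [h0] at ht
      simp at ht
      omega
    have has : a ∈ s := Multiset.mem_of_le ht.1 ha
    have hcca : constantCoeff a = 0 := by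
      rw [hs, Multiset.mem_map] at has
      obtain ⟨g, _, rfl⟩ := has
      rw [map_neg, hℓ]
      simp only
      rw [constantCoeff_algOf']
      simp
    show constantCoeff (Multiset.prod t) = 0
    rw [map_multiset_prod]
    apply Multiset.prod_eq_zero
    rw [← hcca]
    exact Multiset.mem_map_of_mem _ ha
  -- Vieta
  have hv := Multiset.prod_X_add_C_eq_sum_esymm s
  have hev := congrArg (Polynomial.eval (X i : MvPolynomial (Fin mm) F)) hv
  rw [Polynomial.eval_multiset_prod, Multiset.map_map, Polynomial.eval_finset_sum] at hev
  have hz : ((Multiset.map ((fun q => Polynomial.eval (X i) q) ∘ fun r => Polynomial.X + Polynomial.C r) s).prod : MvPolynomial (Fin mm) F) = 0 := by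
    apply Multiset.prod_eq_zero
    rw [Multiset.mem_map]
    refine ⟨-ℓ 1, ?_, ?_⟩
    · rw [hs]
      exact Multiset.mem_map_of_mem _ (Finset.mem_univ_val 1)
    · have hℓ1 : ℓ 1 = X i := by
        rw [hℓ]
        simp only
        rw [map_one]
        rw [show (1 : Module.End F (Fin mm → F)) = LinearMap.id from rfl]
        exact algOf_id' _
      simp [hℓ1]
  rw [hz] at hev
  have hev2 : (0 : MvPolynomial (Fin mm) F)
      = ∑ j ∈ Finset.range (Fintype.card Γ + 1), s.esymm j * X i ^ (Fintype.card Γ - j) := by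
    rw [hev, hcard]
    apply Finset.sum_congr rfl
    intro j _
    simp
  have h0mem : (0 : ℕ) ∈ Finset.range (Fintype.card Γ + 1) := by simp
  rw [← Finset.sum_erase_add _ _ h0mem] at hev2
  have hesymm0 : s.esymm 0 = 1 := by
    simp [Multiset.esymm]
  rw [hesymm0, one_mul, Nat.sub_zero] at hev2
  have : (X i : MvPolynomial (Fin mm) F) ^ (Fintype.card Γ)
      = -∑ j ∈ (Finset.range (Fintype.card Γ + 1)).erase 0, s.esymm j * X i ^ (Fintype.card Γ - j) := by
    exact eq_neg_of_add_eq_zero_right hev2.symm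
  rw [this]
  apply neg_mem
  apply Ideal.sum_mem
  intro j hj
  have hj1 : 1 ≤ j := by
    rcases Finset.mem_erase.mp hj with ⟨hj0, _⟩
    omega
  apply Ideal.mul_mem_right
  apply Ideal.subset_span
  exact ⟨fun g => hinv j g, hcc j hj1⟩

lemma monomial_mem_hilbert {v : Fin mm →₀ ℕ} {c : F} (i : Fin mm)
    (hvi : Fintype.card Γ ≤ v i) : monomial v c ∈ hilbertIdeal σ := by
  have hle : Finsupp.single i (Fintype.card Γ) ≤ v := Finsupp.single_le_iff.mpr hvi
  have : monomial v c
      = monomial (v - Finsupp.single i (Fintype.card Γ)) c * X i ^ (Fintype.card Γ) := by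
    rw [X_pow_eq_monomial, monomial_mul, mul_one, tsub_add_cancel_of_le hle]
  rw [this]
  exact Ideal.mul_mem_left _ _ (X_pow_card_mem_hilbert σ i)

lemma homog_mem_of_large {p : MvPolynomial (Fin mm) F} {d : ℕ}
    (hp : p.IsHomogeneous d) (hd : mm * Fintype.card Γ < d) : p ∈ hilbertIdeal σ := by
  rw [← support_sum_monomial_coeff p]
  apply Ideal.sum_mem
  intro v hv
  have hdeg : v.degree = d := by
    by_contra hne
    exact (mem_support_iff.mp hv) (hp.coeff_eq_zero hne)
  obtain ⟨i, hi⟩ : ∃ i : Fin mm, Fintype.card Γ ≤ v i := by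
    by_contra hall
    push_neg at hall
    have h1 : v.degree ≤ ∑ i : Fin mm, v i := by
      rw [Finsupp.degree]
      apply Finset.sum_le_sum_of_subset (Finset.subset_univ _)
    have h2 : ∑ i : Fin mm, v i ≤ mm * Fintype.card Γ := by
      calc ∑ i : Fin mm, v i ≤ (Finset.univ : Finset (Fin mm)).card • (Fintype.card Γ) := by
            apply Finset.sum_le_card_nsmul
            intro x _
            exact le_of_lt (hall x)
        _ = mm * Fintype.card Γ := by simp [Finset.card_univ, mul_comm]
    omega
  exact monomial_mem_hilbert σ i hi

lemma homog_mem_of_gt_coinvTop {p : MvPolynomial (Fin mm) F} {d : ℕ}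
    (hp : p.IsHomogeneous d) (hd : coinvTop σ < d) : p ∈ hilbertIdeal σ := by
  by_contra hnot
  have hmem : d ∈ {d | ∃ p : MvPolynomial (Fin mm) F, p.IsHomogeneous d ∧ p ∉ hilbertIdeal σ} :=
    ⟨p, hp, hnot⟩
  have hbdd : BddAbove {d | ∃ p : MvPolynomial (Fin mm) F, p.IsHomogeneous d ∧ p ∉ hilbertIdeal σ} := by
    apply BddAbove.mono (t := Set.Iic (mm * Fintype.card Γ))
    · intro e he
      obtain ⟨q, hq, hqn⟩ := he
      by_contra hgt
      exact hqn (homog_mem_of_large σ hq (by simpa using hgt))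
    · exact bddAbove_Iic
  have := le_csSup hbdd hmem
  rw [coinvTop] at hd
  omega

end vieta

lemma ex_pr {Γ : Type} [Group Γ] (H : Subgroup Γ) {nV mm : ℕ}
    (ρ : Representation F H (Fin nV → F)) (σ : Representation F Γ (Fin mm → F))
    (ι : (Fin nV → F) →ₗ[F] (Fin mm → F)) (hι : Function.Injective ι)
    (hequiv : ∀ h : H, σ h ∘ₗ ι = ι ∘ₗ ρ h)
    (C : Set Γ) (hC : Subgroup.IsComplement C (H : Set Γ)) (h1 : (1:Γ) ∈ C)
    (hindep : iSupIndep fun c : C => (LinearMap.range ι).map (σ c.1))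
    (hspan : ⨆ c : C, (LinearMap.range ι).map (σ c.1) = ⊤)
    (hHG : H ≠ ⊤) :
    ∃ (pr : (Fin mm → F) →ₗ[F] (Fin nV → F)) (g₀ : Γ),
      (∀ v, pr (ι v) = v) ∧ (∀ (h : H) (w), pr (σ h w) = ρ h (pr w)) ∧
      (∀ v, pr (σ g₀ (ι v)) = 0) := by
  classical
  set f : C → Submodule F (Fin mm → F) := fun c => (LinearMap.range ι).map (σ c.1) with hf
  set one : C := ⟨1, h1⟩ with hone
  -- uniqueness helpers
  have huniq : ∀ (g : Γ) (c c' : C) (h h' : H),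
      (c : Γ) * (h : Γ) = g → (c' : Γ) * (h' : Γ) = g → c = c' ∧ (h : Γ) = (h' : Γ) := by
    intro g c c' h h' hch hch'
    have h2 := (hC.existsUnique g).unique
      (y₁ := (c, ⟨(h : Γ), by simp⟩)) (y₂ := (c', ⟨(h' : Γ), by simp⟩)) hch hch'
    constructor
    · exact congrArg Prod.fst h2
    · have := congrArg Prod.snd h2
      exact congrArg Subtype.val this
  have hdec : ∀ g : Γ, ∃ (c : C) (h : H), (c : Γ) * (h : Γ) = g := by
    intro g
    obtain ⟨⟨c, h⟩, hch⟩ := (hC.existsUnique g).exists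
    exact ⟨c, ⟨(h : Γ), h.2⟩, hch⟩
  have hCH : ∀ (c : C), (c : Γ) ∈ H → c = one := by
    intro c hc
    exact ((huniq (c : Γ) c one ⟨1, H.one_mem⟩ ⟨(c:Γ), hc⟩ (by simp) (by simp [hone])).1)
  -- the complement submodule
  set K : Submodule F (Fin mm → F) := ⨆ (c : C) (_ : c ≠ one), f c with hK
  have hfone : f one = LinearMap.range ι := by
    rw [hf, hone]
    simp only [map_one]
    rw [show (1 : Module.End F (Fin mm → F)) = LinearMap.id from rfl, Submodule.map_id]
  have hdisj : Disjoint (LinearMap.range ι) K := by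
    rw [← hfone]
    exact (iSupIndep_def.mp hindep) one
  have hcodis : LinearMap.range ι ⊔ K = ⊤ := by
    rw [← top_le_iff, ← hspan]
    apply iSup_le
    intro c
    by_cases hc : c = one
    · subst hc
      rw [← hf, hfone] at *
      exact le_trans (le_of_eq (by rw [hfone])) le_sup_left
    · exact le_trans (le_iSup₂ (f := fun (c : C) (_ : c ≠ one) => f c) c hc) le_sup_right
  have hcompl : IsCompl (LinearMap.range ι) K := ⟨hdisj, codisjoint_iff.mpr hcodis⟩
  set proj := (LinearMap.range ι).linearProjOfIsCompl K hcompl with hproj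
  set eqv := LinearEquiv.ofInjective ι hι with heqv
  set pr : (Fin mm → F) →ₗ[F] (Fin nV → F) := (eqv.symm : _ →ₗ[F] _) ∘ₗ proj with hpr
  -- basic computations
  have hpr1 : ∀ v, pr (ι v) = v := by
    intro v
    have h1' : proj (ι v) = eqv v := by
      have := Submodule.linearProjOfIsCompl_apply_left hcompl (eqv v)
      rw [hproj]
      have hcoe : ((eqv v : LinearMap.range ι) : Fin mm → F) = ι v :=
        LinearEquiv.ofInjective_apply ι v
      rw [← hcoe]
      exact this
    rw [hpr]
    simp only [LinearMap.comp_apply, h1']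
    exact eqv.symm_apply_apply v
  have hprK : ∀ w ∈ K, pr w = 0 := by
    intro w hw
    have : proj w = 0 := Submodule.linearProjOfIsCompl_apply_right hcompl ⟨w, hw⟩
    rw [hpr]
    simp only [LinearMap.comp_apply, this, map_zero]
  have hmemK : ∀ (c : C), c ≠ one → ∀ v, σ (c : Γ) (ι v) ∈ K := by
    intro c hc v
    apply Submodule.mem_iSup_of_mem c
    apply Submodule.mem_iSup_of_mem hc
    exact Submodule.mem_map_of_mem (LinearMap.mem_range_self ι v)
  have hsigma_mul : ∀ (a b : Γ) (w : Fin mm → F), σ a (σ b w) = σ (a * b) w := by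
    intro a b w
    rw [map_mul, Module.End.mul_eq_comp]
    rfl
  have hsigma_h : ∀ (h : H) (v : Fin nV → F), σ (h : Γ) (ι v) = ι (ρ h v) := by
    intro h v
    exact LinearMap.congr_fun (hequiv h) v
  -- key computation: pr (σ c (σ h (ι v))) for c : C, h : H... general decomposition
  have hgen : ∀ (g : Γ) (v : Fin nV → F) (c : C) (h : H), (c:Γ) * (h:Γ) = g →
      pr (σ g (ι v)) = if c = one then ρ h v else 0 := by
    intro g v c h hch
    rw [← hch, ← hsigma_mul, hsigma_h]
    by_cases hc : c = one
    · rw [if_pos hc, hc]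
      have : σ ((one : C) : Γ) = 1 := by rw [hone]; exact map_one σ
      rw [this]
      simp only [Module.End.one_apply]
      exact hpr1 _
    · rw [if_neg hc]
      exact hprK _ (hmemK c hc _)
  -- choose g₀ outside H
  obtain ⟨g₀, hg₀⟩ : ∃ g, g ∉ H := by
    by_contra hall
    push_neg at hall
    exact hHG ((Subgroup.eq_top_iff' H).mpr hall)
  obtain ⟨c₀, h₀, hch₀⟩ := hdec g₀
  have hc₀ : c₀ ≠ one := by
    intro hc
    apply hg₀
    rw [← hch₀, hc, hone]
    simpa using h₀.2
  refine ⟨pr, g₀, hpr1, ?_, ?_⟩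
  · -- equivariance
    intro h w
    have hlin : ∀ w, w ∈ (⊤ : Submodule F (Fin mm → F)) →
        pr (σ (h : Γ) w) = ρ h (pr w) := by
      rw [← hspan]
      intro w hw
      refine Submodule.iSup_induction (motive := fun w => pr (σ (h : Γ) w) = ρ h (pr w))
        _ hw ?_ ?_ ?_
      · rintro c x hx
        obtain ⟨y, hy, rfl⟩ := hx
        obtain ⟨v, rfl⟩ := hy
        obtain ⟨c₂, h₂, hch₂⟩ := hdec ((h : Γ) * (c : Γ))
        have lhs : pr (σ (h:Γ) (σ (c:Γ) (ι v))) = if c₂ = one then ρ h₂ v else 0 := by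
          rw [hsigma_mul]
          exact hgen _ v c₂ h₂ hch₂
        have rhs : pr (σ (c:Γ) (ι v)) = if c = one then v else 0 := by
          have := hgen (c : Γ) v c 1 (by simp)
          simpa using this
        by_cases hc : c = one
        · -- then c₂ = one and h₂ = h
          have h2 : (c₂ : Γ) * (h₂ : Γ) = (1 : Γ) * (h : Γ) := by
            rw [hch₂, hc, hone]; simp
          have := huniq ((1:Γ) * (h:Γ)) c₂ one h₂ h h2 (by simp [hone])
          have hc₂ : c₂ = one := this.1
          have hh₂ : (h₂ : Γ) = (h : Γ) := this.2
          have hh₂' : h₂ = h := Subtype.ext hh₂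
          rw [lhs, rhs, if_pos hc₂, if_pos hc, hh₂']
        · -- c ≠ one ⇒ c₂ ≠ one
          have hc₂ : c₂ ≠ one := by
            intro hc₂
            apply hc
            have h3 : (h:Γ) * (c:Γ) = (h₂:Γ) := by rw [← hch₂, hc₂, hone]; simp
            have h4 : (c : Γ) = (h : Γ)⁻¹ * (h₂ : Γ) := by rw [← h3]; group
            have hcH : (c : Γ) ∈ H := by
              rw [h4]
              exact H.mul_mem (H.inv_mem h.2) h₂.2
            exact hCH c hcH
          rw [lhs, rhs, if_neg hc₂, if_neg hc, map_zero]
      · simp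
      · intro x y hx hy
        rw [map_add, map_add, hx, hy, map_add, map_add]
    exact hlin w trivial
  · intro v
    rw [hgen g₀ v c₀ h₀ hch₀, if_neg hc₀]

lemma keyL {Γ : Type} [Group Γ] [Fintype Γ] (hchar : (Fintype.card Γ : F) ≠ 0)
    (H : Subgroup Γ) {nV mm : ℕ}
    (ρ : Representation F H (Fin nV → F)) (σ : Representation F Γ (Fin mm → F))
    (ι : (Fin nV → F) →ₗ[F] (Fin mm → F))
    (pr : (Fin mm → F) →ₗ[F] (Fin nV → F)) (g₀ : Γ)
    (hpr1 : ∀ v, pr (ι v) = v)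
    (hpr2 : ∀ (h : H) (w), pr (σ h w) = ρ h (pr w))
    (hpr3 : ∀ v, pr (σ g₀ (ι v)) = 0)
    {q : MvPolynomial (Fin nV) F} (hq : q ∈ invariants ρ) (hcc : constantCoeff q = 0)
    (hmem : algOf ι q ∈ hilbertIdeal σ) : q ∈ prodPow ρ 2 := by
  classical
  letI : Fintype H := Fintype.ofFinite _
  have hcard : (Fintype.card H : F) ≠ 0 := by
    obtain ⟨k, hk⟩ := Subgroup.card_subgroup_dvd_card H
    intro h0
    apply hchar
    have : (Nat.card Γ : F) = 0 := by
      rw [hk]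
      push_cast
      rw [Nat.card_eq_fintype_card, h0, zero_mul]
    rwa [Nat.card_eq_fintype_card] at this
  have hpr2' : ∀ h : H, (ρ h) ∘ₗ pr = pr ∘ₗ (σ (h : Γ)) :=
    fun h => LinearMap.ext fun w => (hpr2 h w).symm
  have hπinv : ∀ s, s ∈ invariants σ → algOf pr s ∈ invariants ρ := by
    intro s hs
    rw [mem_invariants]
    intro h
    rw [← algOf_comp', hpr2' h, algOf_comp', hs (h : Γ)]
  have main : ∀ z, z ∈ hilbertIdeal σ → ∀ r : MvPolynomial (Fin mm) F,
      reyn ρ (algOf pr (r * z) - algOf pr (algOf (σ g₀) (r * z))) ∈ prodPow ρ 2 := by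
    intro z hz
    rw [hilbertIdeal] at hz
    refine Submodule.span_induction
      (p := fun z _ => ∀ r : MvPolynomial (Fin mm) F,
        reyn ρ (algOf pr (r * z) - algOf pr (algOf (σ g₀) (r * z))) ∈ prodPow ρ 2)
      ?_ ?_ ?_ ?_ hz
    · rintro s ⟨hsinv, hscc⟩ r
      have e2 : algOf (σ g₀) (r * s) = algOf (σ g₀) r * s := by
        rw [map_mul, hsinv g₀]
      have e5 : algOf pr (r * s) - algOf pr (algOf (σ g₀) (r * s))
          = (algOf pr r - algOf pr (algOf (σ g₀) r)) * algOf pr s := by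
        rw [map_mul, e2, map_mul, sub_mul]
      rw [e5, mul_comm, reyn_mul_invariant ρ (hπinv s hsinv)]
      apply Submodule.subset_span
      refine ⟨![algOf pr s, reyn ρ (algOf pr r - algOf pr (algOf (σ g₀) r))], ?_, ?_⟩
      · rw [Fin.forall_fin_two]
        constructor
        · simp only [Matrix.cons_val_zero]
          exact ⟨hπinv s hsinv, by rw [constantCoeff_algOf', hscc]⟩
        · simp only [Matrix.cons_val_one, Matrix.head_cons, Matrix.cons_val_zero]
          refine ⟨reyn_mem ρ _, ?_⟩
          rw [constantCoeff_reyn ρ hcard, map_sub, constantCoeff_algOf',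
            constantCoeff_algOf', constantCoeff_algOf', sub_self]
      · rw [Fin.prod_univ_two]
        rfl
    · intro r
      simp only [mul_zero, map_zero, sub_zero, reyn_zero]
      exact Submodule.zero_mem _
    · intro x y _ _ hx hy r
      have : r * (x + y) = r * x + r * y := by ring
      rw [this, map_add, map_add, map_add, add_sub_add_comm, reyn_add]
      exact Submodule.add_mem _ (hx r) (hy r)
    · intro a x _ hx r
      rw [smul_eq_mul, ← mul_assoc]
      exact hx (r * a)
  have h1 := main (algOf ι q) hmem 1
  rw [one_mul] at h1
  have e3 : algOf pr (algOf ι q) = q := by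
    rw [← algOf_comp']
    have hid : pr ∘ₗ ι = LinearMap.id := LinearMap.ext hpr1
    rw [hid, algOf_id']
  have e4 : algOf pr (algOf (σ g₀) (algOf ι q)) = 0 := by
    rw [← algOf_comp', ← algOf_comp']
    have hzero : (pr ∘ₗ (σ g₀)) ∘ₗ ι = (0 : (Fin nV → F) →ₗ[F] (Fin nV → F)) := by
      apply LinearMap.ext
      intro v
      simp only [LinearMap.comp_apply, LinearMap.zero_apply]
      exact hpr3 v
    rw [hzero, algOf_zero', hcc, map_zero]
  rw [e3, e4, sub_zero, reyn_of_mem ρ hcard hq] at h1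
  exact h1


lemma homogComp_inv {Γ : Type} [Group Γ] {κ₁ : Type} [Fintype κ₁] [DecidableEq κ₁]
    (τ : Representation F Γ (κ₁ → F)) {q : MvPolynomial κ₁ F}
    (hq : q ∈ invariants τ) (e : ℕ) :
    homogeneousComponent e q ∈ invariants τ := by
  rw [mem_invariants] at hq ⊢
  intro g
  rw [← homogComp_algOf, hq g]


end Stmt10Aux

open Stmt10Aux in
/-- `b(G, Ind_H^G V) ≥ β(H,V)` for a proper subgroup `H`. -/
theorem stmt10
    {G : Type} [Group G] [Fintype G]
    (hchar : (Fintype.card G : F) ≠ 0)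
    (H : Subgroup G) {nV m : ℕ}
    (ρ : Representation F H (Fin nV → F))
    (σ : Representation F G (Fin m → F))
    (ι : (Fin nV → F) →ₗ[F] (Fin m → F)) (hι : Function.Injective ι)
    (hequiv : ∀ h : H, σ h ∘ₗ ι = ι ∘ₗ ρ h)
    (C : Set G) (hC : Subgroup.IsComplement C (H : Set G)) (h1 : (1:G) ∈ C)
    (hindep : iSupIndep fun c : C => (LinearMap.range ι).map (σ c.1))
    (hspan : ⨆ c : C, (LinearMap.range ι).map (σ c.1) = ⊤)
    (hHG : H ≠ ⊤) :
    noether ρ ≤ coinvTop σ := by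
  classical
  obtain ⟨pr, g₀, hpr1, hpr2, hpr3⟩ :=
    ex_pr H ρ σ ι hι hequiv C hC h1 hindep hspan hHG
  set 𝒜 : Subalgebra F (MvPolynomial (Fin nV) F) :=
    Algebra.adjoin F {p : MvPolynomial (Fin nV) F |
      p ∈ invariants ρ ∧ p.totalDegree ≤ coinvTop σ} with h𝒜
  have hQ : ∀ e : ℕ, ∀ z : MvPolynomial (Fin nV) F,
      z ∈ invariants ρ → z.IsHomogeneous e → z ∈ 𝒜 := by
    intro e
    induction e using Nat.strong_induction_on with
    | _ e IH =>
      intro z hz hze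
      by_cases hle : e ≤ coinvTop σ
      · exact Algebra.subset_adjoin ⟨hz, le_trans hze.totalDegree_le hle⟩
      · push_neg at hle
        have he0 : e ≠ 0 := by omega
        have hcc : constantCoeff z = 0 := constantCoeff_of_isHomogeneous hze he0
        have hIz : algOf ι z ∈ hilbertIdeal σ :=
          homog_mem_of_gt_coinvTop σ (isHomogeneous_algOf ι hze) hle
        have hz2 : z ∈ prodPow ρ 2 :=
          keyL hchar H ρ σ ι pr g₀ hpr1 hpr2 hpr3 hz hcc hIz
        have hcomp : ∀ x, x ∈ prodPow ρ 2 → homogeneousComponent e x ∈ 𝒜 := by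
          intro x hx
          refine Submodule.span_induction
            (p := fun x _ => homogeneousComponent e x ∈ 𝒜) ?_ ?_ ?_ ?_ hx
          · rintro x ⟨f, hf, rfl⟩
            rw [Fin.prod_univ_two]
            have hexp : f 0 * f 1
                = ∑ a ∈ Finset.range ((f 0).totalDegree + 1),
                    ∑ c ∈ Finset.range ((f 1).totalDegree + 1),
                      homogeneousComponent a (f 0) * homogeneousComponent c (f 1) := by
              conv_lhs => rw [← sum_homogeneousComponent (f 0),
                ← sum_homogeneousComponent (f 1)]
              rw [Finset.sum_mul_sum]
            rw [hexp, map_sum]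
            apply Subalgebra.sum_mem
            intro a _
            rw [map_sum]
            apply Subalgebra.sum_mem
            intro c _
            have hhom : (homogeneousComponent a (f 0)
                * homogeneousComponent c (f 1)).IsHomogeneous (a + c) :=
              (homogeneousComponent_isHomogeneous a (f 0)).mul
                (homogeneousComponent_isHomogeneous c (f 1))
            rw [homogeneousComponent_of_mem ((mem_homogeneousSubmodule _ _).mpr hhom)]
            by_cases hac : e = a + c
            · rw [if_pos hac]
              by_cases ha0 : a = 0
              · have hz0 : homogeneousComponent a (f 0) = 0 := by
                  rw [ha0, homogeneousComponent_zero]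
                  have hc0' : coeff 0 (f 0) = 0 := by
                    rw [← constantCoeff_eq]; exact (hf 0).2
                  rw [hc0', map_zero]
                rw [hz0, zero_mul]
                exact zero_mem _
              · by_cases hc0 : c = 0
                · have hz1 : homogeneousComponent c (f 1) = 0 := by
                    rw [hc0, homogeneousComponent_zero]
                    have hc1' : coeff 0 (f 1) = 0 := by
                      rw [← constantCoeff_eq]; exact (hf 1).2
                    rw [hc1', map_zero]
                  rw [hz1, mul_zero]
                  exact zero_mem _
                · exact mul_mem
                    (IH a (by omega) _ (homogComp_inv ρ (hf 0).1 a)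
                      (homogeneousComponent_isHomogeneous a (f 0)))
                    (IH c (by omega) _ (homogComp_inv ρ (hf 1).1 c)
                      (homogeneousComponent_isHomogeneous c (f 1)))
            · rw [if_neg hac]
              exact zero_mem _
          · show homogeneousComponent e (0 : MvPolynomial (Fin nV) F) ∈ 𝒜
            rw [map_zero]
            exact zero_mem _
          · intro x y _ _ hx hy
            rw [map_add]
            exact add_mem hx hy
          · intro t x _ hx
            rw [map_smul]
            exact Subalgebra.smul_mem _ hx t
        have hzr : homogeneousComponent e z = z := by
          rw [homogeneousComponent_of_mem ((mem_homogeneousSubmodule _ _).mpr hze),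
            if_pos rfl]
        rw [← hzr]
        exact hcomp z hz2
  have hgen : genLE ρ (coinvTop σ) := by
    rw [genLE]
    apply le_antisymm
    · exact Algebra.adjoin_le fun p hp => hp.1
    · rw [SetLike.le_def]
      intro qq hqq
      rw [← sum_homogeneousComponent qq]
      apply Subalgebra.sum_mem
      intro i _
      exact hQ i _ (homogComp_inv ρ hqq i) (homogeneousComponent_isHomogeneous i qq)
  exact Nat.sInf_le hgen

end
end

section
/- Let N be a normal subgroup of a finite group G, U an F(G/N)-module, V an F N-module, and W = U ⊕ Ind_N^G V (char F ∤ |G|). Then the image of the Hilbert ideal S(W)_+^G S(W) under the natural N-equivariant projection π : S(W) → S(U ⊕ V) equals the ideal of S(U)⊗S(V) generated by S(U)_+^{G/N} and S(V)_+^N. -/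
noncomputable section
open MvPolynomial

variable {F : Type} [Field F]

variable {G : Type} [Group G] {α : Type} [Fintype α] [DecidableEq α]

/-- The linear map `(F^a × F^b) → F^m` assembled from the two summand inclusions,
viewing `F^a × F^b` as functions on the disjoint union of the index sets. -/
noncomputable def sumMap {a b m : ℕ} (f : (Fin a → F) →ₗ[F] (Fin m → F))
    (g : (Fin b → F) →ₗ[F] (Fin m → F)) : ((Fin a ⊕ Fin b) → F) →ₗ[F] (Fin m → F) :=
  (LinearMap.coprod f g) ∘ₗ
    (LinearEquiv.sumArrowLequivProdArrow (Fin a) (Fin b) F F).toLinearMap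

/-- The inclusion `F^a → F^(a+b)` as the first summand. -/
noncomputable def inlHom {a b : ℕ} : (Fin a → F) →ₗ[F] ((Fin a ⊕ Fin b) → F) :=
  (LinearEquiv.sumArrowLequivProdArrow (Fin a) (Fin b) F F).symm.toLinearMap ∘ₗ
    (LinearMap.inl F (Fin a → F) (Fin b → F))

/-- The inclusion `F^b → F^(a+b)` as the second summand. -/
noncomputable def inrHom {a b : ℕ} : (Fin b → F) →ₗ[F] ((Fin a ⊕ Fin b) → F) :=
  (LinearEquiv.sumArrowLequivProdArrow (Fin a) (Fin b) F F).symm.toLinearMap ∘ₗ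
    (LinearMap.inr F (Fin a → F) (Fin b → F))

section Aux
variable {F : Type} [Field F]

theorem lin_add {β : Type} [Fintype β] (w w' : β → F) : lin (w + w') = lin w + lin w' := by
  simp [lin, add_smul, Finset.sum_add_distrib]

theorem lin_smul {β : Type} [Fintype β] (a : F) (w : β → F) : lin (a • w) = a • lin w := by
  simp [lin, Finset.smul_sum, smul_smul]

/-- `lin` as a linear map. -/
noncomputable def linMap {β : Type} [Fintype β] : (β → F) →ₗ[F] MvPolynomial β F where
  toFun := lin
  map_add' := lin_add
  map_smul' := lin_smul

theorem linMap_apply {β : Type} [Fintype β] (w : β → F) : linMap w = lin w := rfl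

theorem lin_zero {β : Type} [Fintype β] : lin (0 : β → F) = 0 := by simp [lin]

theorem lin_single {β : Type} [Fintype β] [DecidableEq β] (i : β) :
    lin (Pi.single i (1 : F)) = X i := by
  rw [lin, Finset.sum_eq_single i (by intro b _ hb; simp [Pi.single_apply, Ne.symm hb])
    (by simp)]
  simp

theorem algOf_X {α β : Type} [Fintype α] [Fintype β] [DecidableEq α]
    (f : (α → F) →ₗ[F] (β → F)) (j : α) :
    algOf f (X j) = lin (f (Pi.single j 1)) := by
  simp [algOf, lin]

theorem map_eq_sum_single {α β : Type} [Fintype α] [DecidableEq α] [Fintype β]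
    (f : (α → F) →ₗ[F] (β → F)) (w : α → F) :
    f w = ∑ i, w i • f (Pi.single i (1:F)) := by
  conv_lhs => rw [← Finset.univ_sum_single w, map_sum]
  refine Finset.sum_congr rfl fun i _ => ?_
  rw [← map_smul]
  congr 1
  funext j
  simp [Pi.single_apply]

theorem algOf_lin {α β : Type} [Fintype α] [Fintype β] [DecidableEq α]
    (f : (α → F) →ₗ[F] (β → F)) (w : α → F) :
    algOf f (lin w) = lin (f w) := by
  rw [lin, map_sum, map_eq_sum_single f w, ← linMap_apply, map_sum]
  simp only [map_smul, algOf_X, linMap_apply]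

theorem algOf_algOf {α β γ : Type} [Fintype α] [Fintype β] [Fintype γ]
    [DecidableEq α] [DecidableEq β]
    (f : (β → F) →ₗ[F] (γ → F)) (g : (α → F) →ₗ[F] (β → F)) (p : MvPolynomial α F) :
    algOf f (algOf g p) = algOf (f ∘ₗ g) p := by
  have : (algOf f).comp (algOf g) = algOf (f ∘ₗ g) := by
    apply MvPolynomial.algHom_ext
    intro j
    simp [algOf_X, algOf_lin]
  exact AlgHom.congr_fun this p

theorem algOf_id {α : Type} [Fintype α] [DecidableEq α] (p : MvPolynomial α F) :
    algOf (LinearMap.id : (α → F) →ₗ[F] (α → F)) p = p := by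
  have : algOf (LinearMap.id : (α → F) →ₗ[F] (α → F)) = AlgHom.id F (MvPolynomial α F) := by
    apply MvPolynomial.algHom_ext
    intro j
    simp [algOf_X, lin_single]
  rw [this]; rfl

theorem constantCoeff_lin {β : Type} [Fintype β] (w : β → F) :
    constantCoeff (lin w) = 0 := by
  simp [lin]

theorem constantCoeff_algOf {α β : Type} [Fintype α] [Fintype β] [DecidableEq α]
    (f : (α → F) →ₗ[F] (β → F)) (p : MvPolynomial α F) :
    constantCoeff (algOf f p) = constantCoeff p := by
  have : (constantCoeff : MvPolynomial β F →+* F).comp (algOf f : MvPolynomial α F →+* _)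
      = constantCoeff := by
    apply MvPolynomial.ringHom_ext
    · intro r; simp
    · intro j; simp [algOf_X, constantCoeff_lin]
  exact RingHom.congr_fun this p

end Aux

section Aux2
variable {F : Type} [Field F]

/-- Two algebra maps out of a polynomial ring agree if they agree on the linear
forms of a spanning family of subspaces of the space of variables. -/
theorem algHom_ext_of_span {m : ℕ} {A : Type} [CommRing A] [Algebra F A]
    {ι : Type} (piece : ι → Submodule F (Fin m → F))
    (hspan : (⨆ i, piece i) = ⊤)
    (Φ Ψ : MvPolynomial (Fin m) F →ₐ[F] A)
    (h : ∀ i, ∀ w ∈ piece i, Φ (lin w) = Ψ (lin w)) : Φ = Ψ := by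
  have key : ∀ w : Fin m → F, Φ (lin w) = Ψ (lin w) := by
    let S : Submodule F (Fin m → F) :=
      { carrier := {w | Φ (lin w) = Ψ (lin w)}
        add_mem' := fun {w} {w'} hw hw' => by
          simp only [Set.mem_setOf_eq, lin_add, map_add] at *
          rw [hw, hw']
        zero_mem' := by simp [lin_zero]
        smul_mem' := fun a w hw => by
          simp only [Set.mem_setOf_eq, lin_smul, map_smul] at *
          rw [hw] }
    have hS : (⊤ : Submodule F (Fin m → F)) ≤ S := by
      rw [← hspan]
      exact iSup_le fun i w hw => h i w hw
    exact fun w => hS trivial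
  apply MvPolynomial.algHom_ext
  intro i
  rw [← lin_single i]
  exact key _

theorem inlHom_single {a b : ℕ} (i : Fin a) :
    (inlHom (F := F) (a := a) (b := b)) (Pi.single i 1) = Pi.single (Sum.inl i) 1 := by
  funext k
  cases k with
  | inl j => simp [inlHom, Pi.single_apply, Sum.inl.injEq]
  | inr j => simp [inlHom, Pi.single_apply]

theorem inrHom_single {a b : ℕ} (j : Fin b) :
    (inrHom (F := F) (a := a) (b := b)) (Pi.single j 1) = Pi.single (Sum.inr j) 1 := by
  funext k
  cases k with
  | inl i => simp [inrHom, Pi.single_apply]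
  | inr i => simp [inrHom, Pi.single_apply, Sum.inr.injEq]

theorem algOf_inlHom {a b : ℕ} (p : MvPolynomial (Fin a) F) :
    algOf (inlHom (F := F) (a := a) (b := b)) p = rename Sum.inl p := by
  have : algOf (inlHom (F := F) (a := a) (b := b)) = rename Sum.inl := by
    apply MvPolynomial.algHom_ext
    intro i
    simp [algOf_X, inlHom_single, lin_single]
  rw [this]

theorem algOf_inrHom {a b : ℕ} (p : MvPolynomial (Fin b) F) :
    algOf (inrHom (F := F) (a := a) (b := b)) p = rename Sum.inr p := by
  have : algOf (inrHom (F := F) (a := a) (b := b)) = rename Sum.inr := by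
    apply MvPolynomial.algHom_ext
    intro i
    simp [algOf_X, inrHom_single, lin_single]
  rw [this]

/-- The projection onto the first block of variables. -/
noncomputable def projL {a b : ℕ} : ((Fin a ⊕ Fin b) → F) →ₗ[F] (Fin a → F) :=
  LinearMap.funLeft F F Sum.inl

theorem projL_single_inl {a b : ℕ} (i : Fin a) :
    (projL (F := F) (a := a) (b := b)) (Pi.single (Sum.inl i) 1) = Pi.single i 1 := by
  funext j
  simp [projL, LinearMap.funLeft_apply, Function.comp, Pi.single_apply, Sum.inl.injEq]

theorem projL_single_inr {a b : ℕ} (j : Fin b) :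
    (projL (F := F) (a := a) (b := b)) (Pi.single (Sum.inr j) 1) = 0 := by
  funext i
  simp [projL, LinearMap.funLeft_apply, Function.comp, Pi.single_apply]

theorem algOf_projL_rename_inl {a b : ℕ} (p : MvPolynomial (Fin a) F) :
    algOf (projL (F := F) (a := a) (b := b)) (rename Sum.inl p) = p := by
  have : (algOf (projL (F := F) (a := a) (b := b))).comp (rename Sum.inl)
      = AlgHom.id F (MvPolynomial (Fin a) F) := by
    apply MvPolynomial.algHom_ext
    intro i
    simp [algOf_X, projL_single_inl, lin_single]
  exact AlgHom.congr_fun this p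

theorem map_constantCoeff_sumAlgEquiv {a b : ℕ} (p : MvPolynomial (Fin a ⊕ Fin b) F) :
    MvPolynomial.map (constantCoeff) ((sumAlgEquiv F (Fin a) (Fin b)) p)
      = algOf (projL (F := F) (a := a) (b := b)) p := by
  have : (MvPolynomial.map (constantCoeff : MvPolynomial (Fin b) F →+* F)).comp
        ((sumAlgEquiv F (Fin a) (Fin b)) : MvPolynomial (Fin a ⊕ Fin b) F →+* _)
      = ((algOf (projL (F := F) (a := a) (b := b)) :
          MvPolynomial (Fin a ⊕ Fin b) F →ₐ[F] MvPolynomial (Fin a) F) :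
          MvPolynomial (Fin a ⊕ Fin b) F →+* MvPolynomial (Fin a) F) := by
    apply MvPolynomial.ringHom_ext
    · intro r
      simp [sumAlgEquiv_C_inl, sumAlgEquiv_X_inl, sumAlgEquiv_X_inr]
    · rintro (i | j)
      · simp [sumAlgEquiv_C_inl, sumAlgEquiv_X_inl, sumAlgEquiv_X_inr, algOf_X,
          projL_single_inl, lin_single]
      · simp [sumAlgEquiv_C_inl, sumAlgEquiv_X_inl, sumAlgEquiv_X_inr, algOf_X,
          projL_single_inr, lin_zero]
  exact RingHom.congr_fun this p

theorem sumAlgEquiv_symm_C {a b : ℕ} (q : MvPolynomial (Fin b) F) :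
    (sumAlgEquiv F (Fin a) (Fin b)).symm (MvPolynomial.C q) = rename Sum.inr q := by
  rw [AlgEquiv.symm_apply_eq]
  have := AlgHom.congr_fun (sumAlgEquiv_comp_rename_inr F (Fin a) (Fin b)) q
  simpa [MvPolynomial.algebraMap_eq] using this.symm

theorem compl_eq_one {G : Type} [Group G] {N : Subgroup G} {C : Set G}
    (hC : Subgroup.IsComplement C (N : Set G)) (h1 : (1:G) ∈ C) {c : G}
    (hc : c ∈ C) (hcN : c ∈ N) : c = 1 := by
  have h := hC.1 (a₁ := (⟨⟨c, hc⟩, ⟨1, N.one_mem⟩⟩ : C × (N : Set G)))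
    (a₂ := ⟨⟨1, h1⟩, ⟨c, hcN⟩⟩) (by simp)
  exact congrArg (fun x => (x.1 : G)) h

theorem compl_equiv_eq {G : Type} [Group G] {N : Subgroup G} {C : Set G}
    (hC : Subgroup.IsComplement C (N : Set G)) {c n : G}
    (hc : c ∈ C) (hn : n ∈ (N : Set G)) :
    hC.equiv (c * n) = (⟨c, hc⟩, ⟨n, hn⟩) := by
  rw [Equiv.apply_eq_iff_eq_symm_apply, Subgroup.IsComplement.equiv_symm_apply]

end Aux2
section Aux3
variable {F : Type} [Field F]

theorem sumAlgEquiv_rename_inr {a b : ℕ} (q : MvPolynomial (Fin b) F) :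
    (sumAlgEquiv F (Fin a) (Fin b)) (rename Sum.inr q) = MvPolynomial.C q := by
  rw [← sumAlgEquiv_symm_C (a := a) (b := b) q, AlgEquiv.apply_symm_apply]

theorem sumToIter_rename_inr {a b : ℕ} (q : MvPolynomial (Fin b) F) :
    sumToIter F (Fin a) (Fin b) (rename Sum.inr q) = MvPolynomial.C q := by
  induction q using MvPolynomial.induction_on <;> simp_all [sumToIter_C, sumToIter_Xr]

theorem projL_inlHom {a b : ℕ} (u : Fin a → F) :
    (projL (F := F) (a := a) (b := b)) (inlHom u) = u := by
  funext i
  simp [projL, inlHom, LinearMap.funLeft_apply]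

theorem projL_inrHom {a b : ℕ} (v : Fin b → F) :
    (projL (F := F) (a := a) (b := b)) (inrHom v) = 0 := by
  funext i
  simp [projL, inrHom, LinearMap.funLeft_apply]

theorem lin_inlHom {a b : ℕ} (u : Fin a → F) :
    lin (inlHom (F := F) (a := a) (b := b) u) = rename Sum.inl (lin u) := by
  rw [← algOf_inlHom, algOf_lin]

theorem lin_inrHom {a b : ℕ} (v : Fin b → F) :
    lin (inrHom (F := F) (a := a) (b := b) v) = rename Sum.inr (lin v) := by
  rw [← algOf_inrHom, algOf_lin]

end Aux3

/-- for `W = U ⊕ Ind_N^G V`, the image of the Hilbert ideal of `S(W)`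
under the natural projection `π : S(W) → S(U ⊕ V)` is the ideal generated by
`S(U)₊^(G/N)` and `S(V)₊^N`. -/
theorem stmt14
    {G : Type} [Group G] [Fintype G]
    (hchar : (Fintype.card G : F) ≠ 0)
    (N : Subgroup G) [N.Normal] {nU nV m : ℕ}
    (ρU : Representation F (G ⧸ N) (Fin nU → F))
    (ρV : Representation F N (Fin nV → F))
    (σ : Representation F G (Fin m → F))
    (ιU : (Fin nU → F) →ₗ[F] (Fin m → F)) (hιU : Function.Injective ιU)
    (ιV : (Fin nV → F) →ₗ[F] (Fin m → F)) (hιV : Function.Injective ιV)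
    (hU : ∀ g : G, σ g ∘ₗ ιU = ιU ∘ₗ ρU (QuotientGroup.mk g))
    (hV : ∀ x : N, σ x ∘ₗ ιV = ιV ∘ₗ ρV x)
    (C : Set G) (hC : Subgroup.IsComplement C (N : Set G)) (h1 : (1:G) ∈ C)
    (hindep : iSupIndep fun o : Option C =>
      Option.elim o (LinearMap.range ιU) (fun c => (LinearMap.range ιV).map (σ c.1)))
    (hspan : (⨆ o : Option C,
      Option.elim o (LinearMap.range ιU) (fun c => (LinearMap.range ιV).map (σ c.1))) = ⊤)
    (π : MvPolynomial (Fin m) F →ₐ[F] MvPolynomial (Fin nU ⊕ Fin nV) F)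
    (hπ1 : π.comp (algOf (sumMap ιU ιV)) = AlgHom.id F (MvPolynomial (Fin nU ⊕ Fin nV) F))
    (hπ2 : ∀ c ∈ C, c ∉ N → ∀ v : Fin nV → F, π (lin (σ c (ιV v))) = 0) :
    (hilbertIdeal σ).map π = Ideal.span
      ((algOf (inlHom (F := F) (a := nU) (b := nV)) ''
          {p | p ∈ invariants ρU ∧ MvPolynomial.constantCoeff p = 0}) ∪
        (algOf (inrHom (F := F) (a := nU) (b := nV)) ''
          {p | p ∈ invariants ρV ∧ MvPolynomial.constantCoeff p = 0})) := by
  have hN : N.Normal := inferInstance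
  classical
  have hσcomp : ∀ g h : G, σ (g * h) = σ g ∘ₗ σ h := fun g h => by rw [map_mul]; rfl
  have hπSum : ∀ w, π (algOf (sumMap ιU ιV) w) = w := AlgHom.congr_fun hπ1
  have hsumInl : ∀ u, sumMap ιU ιV (inlHom (F := F) (a := nU) (b := nV) u) = ιU u := by
    intro u; simp [sumMap, inlHom]
  have hsumInr : ∀ v, sumMap ιU ιV (inrHom (F := F) (a := nU) (b := nV) v) = ιV v := by
    intro v; simp [sumMap, inrHom]
  have hπlinU : ∀ u, π (lin (ιU u)) = lin (inlHom (F := F) (a := nU) (b := nV) u) := by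
    intro u; rw [← hsumInl u, ← algOf_lin, hπSum]
  have hπlinV : ∀ v, π (lin (ιV v)) = lin (inrHom (F := F) (a := nU) (b := nV) v) := by
    intro v; rw [← hsumInr v, ← algOf_lin, hπSum]
  have hcompInl : sumMap ιU ιV ∘ₗ (inlHom (F := F) (a := nU) (b := nV)) = ιU :=
    LinearMap.ext hsumInl
  have hcompInr : sumMap ιU ιV ∘ₗ (inrHom (F := F) (a := nU) (b := nV)) = ιV :=
    LinearMap.ext hsumInr
  have hπU : ∀ p : MvPolynomial (Fin nU) F, π (algOf ιU p) = rename Sum.inl p := by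
    intro p
    rw [← hcompInl, ← algOf_algOf, hπSum, algOf_inlHom]
  have hπV : ∀ p : MvPolynomial (Fin nV) F, π (algOf ιV p) = rename Sum.inr p := by
    intro p
    rw [← hcompInr, ← algOf_algOf, hπSum, algOf_inrHom]
  have hmkN : ∀ n : N, ((n : G) : G ⧸ N) = 1 := fun n => (QuotientGroup.eq_one_iff _).2 n.2
  have hσNU : ∀ (n : N) (u : Fin nU → F), σ (n : G) (ιU u) = ιU u := by
    intro n u
    have h2 := LinearMap.congr_fun (hU (n : G)) u
    simp only [LinearMap.comp_apply] at h2
    rw [h2, hmkN n, map_one, Module.End.one_apply]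
  have hσU : ∀ (g : G) (u : Fin nU → F),
      σ g (ιU u) = ιU (ρU (QuotientGroup.mk g) u) := by
    intro g u
    have h2 := LinearMap.congr_fun (hU g) u
    simpa using h2
  have hσV : ∀ (n : N) (v : Fin nV → F), σ (n : G) (ιV v) = ιV (ρV n v) := by
    intro n v
    have h2 := LinearMap.congr_fun (hV n) v
    simpa using h2
  have hCcase : ∀ c ∈ C, c = 1 ∨ c ∉ N := by
    intro c hc
    by_cases h : c ∈ N
    · exact Or.inl (compl_eq_one hC h1 hc h)
    · exact Or.inr h
  have hσ1 : ∀ x : Fin m → F, σ 1 x = x := by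
    intro x; rw [map_one, Module.End.one_apply]
  
  have hπkill : ∀ c : G, c ∈ C → c ∉ N → ∀ p : MvPolynomial (Fin nV) F,
      π (algOf (σ c ∘ₗ ιV) p) = MvPolynomial.C (constantCoeff p) := by
    intro c hc hcN p
    have hcomp : π.comp (algOf (σ c ∘ₗ ιV))
        = aeval (fun _ : Fin nV => (0 : MvPolynomial (Fin nU ⊕ Fin nV) F)) := by
      apply MvPolynomial.algHom_ext
      intro j
      simp only [AlgHom.comp_apply, algOf_X, aeval_X, LinearMap.comp_apply]
      exact hπ2 c hc hcN _
    have h2 := AlgHom.congr_fun hcomp p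
    simp only [AlgHom.comp_apply] at h2
    rw [h2, aeval_zero']
    rfl
  -- the action of N on S(U ⊕ V)
  set An : N → (MvPolynomial (Fin nU ⊕ Fin nV) F →ₐ[F] MvPolynomial (Fin nU ⊕ Fin nV) F) :=
    fun n => aeval (Sum.elim (fun i => X (Sum.inl i))
      (fun j => rename Sum.inr (algOf (ρV n) (X j)))) with hAnDef
  have hAnInl : ∀ (n : N) (t : MvPolynomial (Fin nU) F),
      An n (rename Sum.inl t) = rename Sum.inl t := by
    intro n t
    have h2 : (An n).comp (rename Sum.inl)
        = (rename (Sum.inl : Fin nU → Fin nU ⊕ Fin nV) :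
            MvPolynomial (Fin nU) F →ₐ[F] MvPolynomial (Fin nU ⊕ Fin nV) F) := by
      apply MvPolynomial.algHom_ext
      intro i
      simp [hAnDef]
    exact AlgHom.congr_fun h2 t
  have hAnInr : ∀ (n : N) (q : MvPolynomial (Fin nV) F),
      An n (rename Sum.inr q) = rename Sum.inr (algOf (ρV n) q) := by
    intro n q
    have h2 : (An n).comp (rename Sum.inr)
        = ((rename (Sum.inr : Fin nV → Fin nU ⊕ Fin nV) :
            MvPolynomial (Fin nV) F →ₐ[F] MvPolynomial (Fin nU ⊕ Fin nV) F)).comp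
            (algOf (ρV n)) := by
      apply MvPolynomial.algHom_ext
      intro j
      simp [hAnDef]
    exact AlgHom.congr_fun h2 q
  have hAnE : ∀ (n : N) (s : MvPolynomial (Fin nU ⊕ Fin nV) F),
      (sumAlgEquiv F (Fin nU) (Fin nV)) (An n s)
        = MvPolynomial.map ((algOf (ρV n) : MvPolynomial (Fin nV) F →ₐ[F] _) :
            MvPolynomial (Fin nV) F →+* MvPolynomial (Fin nV) F)
            ((sumAlgEquiv F (Fin nU) (Fin nV)) s) := by
    intro n s
    have h2 : (((sumAlgEquiv F (Fin nU) (Fin nV)).toAlgHom :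
          MvPolynomial (Fin nU ⊕ Fin nV) F →+*
            MvPolynomial (Fin nU) (MvPolynomial (Fin nV) F)).comp
          ((An n : MvPolynomial (Fin nU ⊕ Fin nV) F →ₐ[F] _) :
            MvPolynomial (Fin nU ⊕ Fin nV) F →+* _))
        = (MvPolynomial.map ((algOf (ρV n) : MvPolynomial (Fin nV) F →ₐ[F] _) :
            MvPolynomial (Fin nV) F →+* MvPolynomial (Fin nV) F)).comp
          ((sumAlgEquiv F (Fin nU) (Fin nV)).toAlgHom :
            MvPolynomial (Fin nU ⊕ Fin nV) F →+*
              MvPolynomial (Fin nU) (MvPolynomial (Fin nV) F)) := by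
      apply MvPolynomial.ringHom_ext
      · intro r
        simp [hAnDef, sumAlgEquiv_C_inl, sumAlgEquiv_X_inl, sumAlgEquiv_X_inr]
      · rintro (i | j)
        · simp [hAnDef, sumAlgEquiv_C_inl, sumAlgEquiv_X_inl, sumAlgEquiv_X_inr]
        · simp [hAnDef, sumAlgEquiv_C_inl, sumAlgEquiv_X_inl, sumAlgEquiv_X_inr,
            sumToIter_rename_inr, sumAlgEquiv_rename_inr]
    exact RingHom.congr_fun h2 s
  
  -- conjugation decomposition for n * c with c ∉ N
  have hconj : ∀ (n : N) (c : G), c ∈ C → ∀ v : Fin nV → F,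
      σ ((n : G) * c) (ιV v) = σ c (ιV (ρV ⟨c⁻¹ * n * c, by
        simpa [mul_assoc] using hN.conj_mem (n : G) n.2 c⁻¹⟩ v)) := by
    intro n c hc v
    have hdec : (n : G) * c = c * (c⁻¹ * (n : G) * c) := by group
    conv_lhs => rw [hdec, hσcomp]
    rw [LinearMap.comp_apply]
    congr 1
    exact hσV ⟨c⁻¹ * n * c, by simpa [mul_assoc] using hN.conj_mem (n : G) n.2 c⁻¹⟩ v
  -- N-equivariance of π
  have hπN : ∀ n : N, (An n).comp π = π.comp (algOf (σ (n : G))) := by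
    intro n
    apply algHom_ext_of_span _ hspan
    rintro (_ | c) w hw
    · obtain ⟨u, rfl⟩ := hw
      simp only [AlgHom.comp_apply]
      rw [algOf_lin, hσNU n u, hπlinU u, lin_inlHom, hAnInl]
    · obtain ⟨-, ⟨v, rfl⟩, rfl⟩ := hw
      simp only [AlgHom.comp_apply]
      rcases hCcase c.1 c.2 with hc1 | hcN
      · rw [hc1, hσ1, algOf_lin]
        have h3 : σ (n : G) (ιV v) = ιV (ρV n v) := hσV n v
        rw [h3, hπlinV, hπlinV, lin_inrHom, lin_inrHom, hAnInr, algOf_lin]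
      · rw [algOf_lin]
        have h3 : σ (n : G) (σ c.1 (ιV v)) = σ ((n : G) * c.1) (ιV v) := by
          rw [hσcomp]; rfl
        rw [h3, hconj n c.1 c.2 v, hπ2 c.1 c.2 hcN, hπ2 c.1 c.2 hcN, map_zero]
  -- G-equivariance of the composite onto S(U)
  have hprojπ0 : ∀ c : G, c ∈ C → ∀ v : Fin nV → F,
      algOf (projL (F := F) (a := nU) (b := nV)) (π (lin (σ c (ιV v)))) = 0 := by
    intro c hc v
    rcases hCcase c hc with hc1 | hcN
    · subst hc1
      rw [hσ1, hπlinV, algOf_lin, projL_inrHom, lin_zero]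
    · rw [hπ2 c hc hcN, map_zero]
  have hψ : ∀ g : G,
      ((algOf (projL (F := F) (a := nU) (b := nV))).comp π).comp (algOf (σ g))
        = (algOf (ρU (QuotientGroup.mk g))).comp
            ((algOf (projL (F := F) (a := nU) (b := nV))).comp π) := by
    intro g
    apply algHom_ext_of_span _ hspan
    rintro (_ | c) w hw
    · obtain ⟨u, rfl⟩ := hw
      simp only [AlgHom.comp_apply]
      rw [algOf_lin, hσU g u, hπlinU, hπlinU, algOf_lin, algOf_lin, projL_inlHom,
        projL_inlHom, algOf_lin]
    · obtain ⟨-, ⟨v, rfl⟩, rfl⟩ := hw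
      simp only [AlgHom.comp_apply]
      rw [hprojπ0 c.1 c.2 v, map_zero, algOf_lin]
      have h3 : σ g (σ c.1 (ιV v)) = σ (g * c.1) (ιV v) := by rw [hσcomp]; rfl
      rw [h3]
      -- decompose g * c = c' * n'
      set x := g * c.1 with hx
      have hxdec := hC.equiv_fst_mul_equiv_snd x
      set c' := ((hC.equiv x).1 : G) with hc'
      set n' := ((hC.equiv x).2 : G) with hn'
      have hc'C : c' ∈ C := (hC.equiv x).1.2
      have hn'N : n' ∈ N := (hC.equiv x).2.2
      have h4 : σ x (ιV v) = σ c' (ιV (ρV ⟨n', hn'N⟩ v)) := by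
        rw [← hxdec, hσcomp, LinearMap.comp_apply, hσV ⟨n', hn'N⟩ v]
      rw [h4, hprojπ0 c' hc'C _]
  -- π preserves constant coefficients
  have hcc : ∀ p : MvPolynomial (Fin m) F, constantCoeff (π p) = constantCoeff p := by
    have h2 : (aeval (fun _ : Fin nU ⊕ Fin nV => (0 : F))).comp π
        = aeval (fun _ : Fin m => (0 : F)) := by
      apply algHom_ext_of_span _ hspan
      rintro (_ | c) w hw
      · obtain ⟨u, rfl⟩ := hw
        simp only [AlgHom.comp_apply]
        rw [hπlinU, aeval_zero', aeval_zero', constantCoeff_lin, constantCoeff_lin]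
      · obtain ⟨-, ⟨v, rfl⟩, rfl⟩ := hw
        simp only [AlgHom.comp_apply]
        have hr : (aeval (fun _ : Fin m => (0 : F))) (lin (σ c.1 (ιV v))) = 0 := by
          rw [aeval_zero', constantCoeff_lin, map_zero]
        rw [hr]
        rcases hCcase c.1 c.2 with hc1 | hcN
        · rw [hc1, hσ1, hπlinV, aeval_zero', constantCoeff_lin, map_zero]
        · rw [hπ2 c.1 c.2 hcN, map_zero]
    intro p
    have h3 := AlgHom.congr_fun h2 p
    simp only [AlgHom.comp_apply, aeval_zero'] at h3
    simpa using h3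
  
  -- equiv-fst computation
  have hfst : ∀ (z c : G), c ∈ C → (∃ n ∈ N, z = c * n) → ((hC.equiv z).1 : G) = c := by
    rintro z c hc ⟨n, hn, rfl⟩
    rw [compl_equiv_eq hC hc hn]
  -- rewrite images through rename
  have himgU : (algOf (inlHom (F := F) (a := nU) (b := nV)) ''
        {p : MvPolynomial (Fin nU) F | p ∈ invariants ρU ∧ constantCoeff p = 0})
      = (rename Sum.inl '' {p : MvPolynomial (Fin nU) F |
          p ∈ invariants ρU ∧ constantCoeff p = 0}) :=
    Set.image_congr fun p _ => algOf_inlHom p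
  have himgV : (algOf (inrHom (F := F) (a := nU) (b := nV)) ''
        {p : MvPolynomial (Fin nV) F | p ∈ invariants ρV ∧ constantCoeff p = 0})
      = (rename Sum.inr '' {p : MvPolynomial (Fin nV) F |
          p ∈ invariants ρV ∧ constantCoeff p = 0}) :=
    Set.image_congr fun p _ => algOf_inrHom p
  rw [himgU, himgV, hilbertIdeal, Ideal.map_span]
  apply le_antisymm
  · rw [Ideal.span_le]
    rintro x ⟨p, ⟨hpI, hp0⟩, rfl⟩
    have hpInv : ∀ g : G, algOf (σ g) p = p := hpI
    set r := π p with hr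
    set p₀ := algOf (projL (F := F) (a := nU) (b := nV)) r with hp₀
    have hp₀I : p₀ ∈ invariants ρU := by
      intro h
      obtain ⟨g, rfl⟩ := QuotientGroup.mk_surjective h
      have h2 := AlgHom.congr_fun (hψ g) p
      simp only [AlgHom.comp_apply] at h2
      rw [hpInv g] at h2
      exact h2.symm
    have hrc : constantCoeff r = 0 := by rw [hr, hcc, hp0]
    have hp₀0 : constantCoeff p₀ = 0 := by rw [hp₀, constantCoeff_algOf, hrc]
    set s := r - rename Sum.inl p₀ with hs
    have hmem1 : rename Sum.inl p₀ ∈ Ideal.span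
        ((rename Sum.inl '' {p : MvPolynomial (Fin nU) F |
            p ∈ invariants ρU ∧ constantCoeff p = 0}) ∪
          (rename Sum.inr '' {p : MvPolynomial (Fin nV) F |
            p ∈ invariants ρV ∧ constantCoeff p = 0})) :=
      Ideal.subset_span (Or.inl ⟨p₀, ⟨hp₀I, hp₀0⟩, rfl⟩)
    set t := (sumAlgEquiv F (Fin nU) (Fin nV)) s with ht
    have hprojs : algOf (projL (F := F) (a := nU) (b := nV)) s = 0 := by
      rw [hs, map_sub, algOf_projL_rename_inl, hp₀, sub_self]
    have hmapcc : MvPolynomial.map (constantCoeff : MvPolynomial (Fin nV) F →+* F) t = 0 := by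
      rw [ht, map_constantCoeff_sumAlgEquiv, hprojs]
    have hcoeff0 : ∀ μ, constantCoeff (coeff μ t) = 0 := by
      intro μ
      have h2 := congrArg (fun q => coeff μ q) hmapcc
      simpa [MvPolynomial.coeff_map] using h2
    have hAns : ∀ n : N, An n s = s := by
      intro n
      have h2 := AlgHom.congr_fun (hπN n) p
      simp only [AlgHom.comp_apply] at h2
      rw [hpInv (n : G)] at h2
      rw [hs, map_sub, h2, hAnInl]
    have hcoeffI : ∀ μ, coeff μ t ∈ invariants ρV := by
      intro μ n
      have h2 : MvPolynomial.map ((algOf (ρV n) : MvPolynomial (Fin nV) F →ₐ[F] _) :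
          MvPolynomial (Fin nV) F →+* MvPolynomial (Fin nV) F) t = t := by
        rw [ht, ← hAnE n s, hAns n]
      have h3 := congrArg (fun q => coeff μ q) h2
      simpa [MvPolynomial.coeff_map] using h3
    have hsmem : s ∈ Ideal.span
        ((rename Sum.inl '' {p : MvPolynomial (Fin nU) F |
            p ∈ invariants ρU ∧ constantCoeff p = 0}) ∪
          (rename Sum.inr '' {p : MvPolynomial (Fin nV) F |
            p ∈ invariants ρV ∧ constantCoeff p = 0})) := by
      have hrec : s = ∑ μ ∈ t.support,
          (sumAlgEquiv F (Fin nU) (Fin nV)).symm (monomial μ (coeff μ t)) := by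
        rw [← map_sum, ← MvPolynomial.as_sum t, ht, AlgEquiv.symm_apply_apply]
      rw [hrec]
      apply Ideal.sum_mem
      intro μ _
      have hmono : (monomial μ) (coeff μ t)
          = MvPolynomial.C (coeff μ t) * (monomial μ) (1 : MvPolynomial (Fin nV) F) := by
        rw [MvPolynomial.C_mul_monomial, mul_one]
      rw [hmono, map_mul, sumAlgEquiv_symm_C]
      exact Ideal.mul_mem_right _ _
        (Ideal.subset_span (Or.inr ⟨coeff μ t, ⟨hcoeffI μ, hcoeff0 μ⟩, rfl⟩))
    have hfin : r = rename Sum.inl p₀ + s := by rw [hs]; ring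
    rw [hfin]
    exact Ideal.add_mem _ hmem1 hsmem
  · rw [Ideal.span_le]
    rintro x (⟨p, ⟨hpI, hp0⟩, rfl⟩ | ⟨p, ⟨hpI, hp0⟩, rfl⟩)
    · have hpInv : ∀ h : G ⧸ N, algOf (ρU h) p = p := hpI
      rw [← hπU p]
      refine Ideal.subset_span ⟨algOf ιU p, ⟨?_, by rw [constantCoeff_algOf]; exact hp0⟩, rfl⟩
      intro g
      rw [algOf_algOf, hU g, ← algOf_algOf, hpInv _]
    · have hpInv : ∀ n : N, algOf (ρV n) p = p := hpI
      set Cf : Finset G := (Set.toFinite C).toFinset with hCf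
      have hmemCf : ∀ c : G, c ∈ Cf ↔ c ∈ C := by
        intro c; rw [hCf, Set.Finite.mem_toFinset]
      set q : MvPolynomial (Fin m) F := ∑ c ∈ Cf, algOf (σ c ∘ₗ ιV) p with hq
      have hπq : π q = rename Sum.inr p := by
        have h0 : ∀ c ∈ Cf, c ≠ 1 → π (algOf (σ c ∘ₗ ιV) p) = 0 := by
          intro c hcF hc1
          have hcC : c ∈ C := (hmemCf c).1 hcF
          have hcN : c ∉ N := by
            rcases hCcase c hcC with h | h
            · exact absurd h hc1
            · exact h
          rw [hπkill c hcC hcN, hp0, map_zero]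
        have hsum : π q = ∑ c ∈ Cf, π (algOf (σ c ∘ₗ ιV) p) := by rw [hq, map_sum]
        rw [hsum, Finset.sum_eq_single_of_mem (1 : G) ((hmemCf 1).2 h1) h0]
        have h2 : σ (1 : G) ∘ₗ ιV = ιV := LinearMap.ext fun v => hσ1 (ιV v)
        rw [h2, hπV]
      have hq0 : constantCoeff q = 0 := by
        rw [hq, map_sum]
        apply Finset.sum_eq_zero
        intro c _
        rw [constantCoeff_algOf, hp0]
      have hqI : q ∈ invariants σ := by
        intro g
        have hterm : ∀ c ∈ Cf, algOf (σ g) (algOf (σ c ∘ₗ ιV) p)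
            = algOf (σ (((hC.equiv (g * c)).1 : G)) ∘ₗ ιV) p := by
          intro c hcF
          rw [algOf_algOf, ← LinearMap.comp_assoc, ← hσcomp]
          set x := g * c with hx
          have hn'N : ((hC.equiv x).2 : G) ∈ N := (hC.equiv x).2.2
          have h3 : σ x ∘ₗ ιV
              = (σ ((hC.equiv x).1 : G) ∘ₗ ιV) ∘ₗ (ρV ⟨_, hn'N⟩ : (Fin nV → F) →ₗ[F] _) := by
            conv_lhs => rw [← hC.equiv_fst_mul_equiv_snd x]
            rw [hσcomp, LinearMap.comp_assoc, LinearMap.comp_assoc]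
            congr 1
            exact hV ⟨_, hn'N⟩
          rw [h3, ← algOf_algOf, hpInv ⟨_, hn'N⟩]
        rw [hq, map_sum, Finset.sum_congr rfl hterm]
        apply Finset.sum_nbij' (i := fun c => ((hC.equiv (g * c)).1 : G))
          (j := fun c => ((hC.equiv (g⁻¹ * c)).1 : G))
        · intro c _
          exact (hmemCf _).2 (hC.equiv (g * c)).1.2
        · intro c _
          exact (hmemCf _).2 (hC.equiv (g⁻¹ * c)).1.2
        · intro c hcF
          apply hfst
          · exact (hmemCf c).1 hcF
          · refine ⟨((hC.equiv (g * c)).2 : G)⁻¹, N.inv_mem (hC.equiv (g * c)).2.2, ?_⟩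
            rw [hC.equiv_fst_eq_mul_inv (g * c)]
            group
        · intro c hcF
          apply hfst
          · exact (hmemCf c).1 hcF
          · refine ⟨((hC.equiv (g⁻¹ * c)).2 : G)⁻¹, N.inv_mem (hC.equiv (g⁻¹ * c)).2.2, ?_⟩
            rw [hC.equiv_fst_eq_mul_inv (g⁻¹ * c)]
            group
        · intro c _
          rfl
      rw [← hπq]
      exact Ideal.subset_span ⟨q, ⟨hqI, hq0⟩, rfl⟩


end
end
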